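/- Let X be a Gaussian random p-vector with mean Γ τ and covariance Γ, where Γ is symmetric positive definite, Υ is a p×r full-rank matrix, and τ ∈ R^p. Set P := Γ^{1/2} Υ (Υ' Γ Υ)^{-1} Υ' Γ^{1/2} and P⊥ := I_p − P. Then Y := Γ^{-1/2} P Γ^{-1/2} X − τ is Gaussian with mean −Γ^{-1/2} P⊥ Γ^{1/2} τ and covariance Γ^{-1/2} P Γ^{-1/2}, so that E[Y Y'] = Γ^{-1/2} P Γ^{-1/2} + Γ^{-1/2} P⊥ Γ^{1/2} τ τ' Γ^{1/2} P⊥ Γ^{-1/2}. -/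

import Mathlib

open MeasureTheory ProbabilityTheory Matrix

section Aux

open Real Filter Set Topology
open scoped ENNReal NNReal

/-- auxiliary: the standard Gaussian density kernel -/
noncomputable def stmtAuxGE (x : ℝ) : ℝ := Real.exp (-(1/2) * x ^ 2)

lemma stmtAuxGE_int : Integrable stmtAuxGE := integrable_exp_neg_mul_sq (by norm_num)

lemma stmtAuxGE2_int : Integrable (fun x => x ^ 2 * stmtAuxGE x) := by
  have h := integrable_rpow_mul_exp_neg_mul_sq (b := 1/2) (by norm_num) (s := 2) (by norm_num)
  refine h.congr (Eventually.of_forall fun x => ?_)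
  show x ^ ((2:ℕ):ℝ) * rexp (-(1/2) * x ^ 2) = x ^ 2 * stmtAuxGE x
  rw [Real.rpow_natCast]
  rfl

lemma stmtAuxGE1_int : Integrable (fun x => x * stmtAuxGE x) :=
  integrable_mul_exp_neg_mul_sq (by norm_num)

lemma stmtAuxGE_integral : ∫ x, stmtAuxGE x = Real.sqrt (2 * π) := by
  have h := integral_gaussian (1/2)
  rw [show π / (1/2) = 2 * π by ring] at h
  simpa [stmtAuxGE, neg_mul] using h

lemma stmtAuxGE1_integral : ∫ x, x * stmtAuxGE x = 0 := by
  have h := MeasureTheory.integral_neg_eq_self (fun x => x * stmtAuxGE x) volume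
  have he : (fun x : ℝ => (-x) * stmtAuxGE (-x)) = fun x => -(x * stmtAuxGE x) := by
    funext x; simp only [stmtAuxGE, neg_sq]; ring
  rw [he, integral_neg] at h
  linarith

lemma stmtAux_tendsto_cocompact :
    Tendsto (fun x => x * stmtAuxGE x) (Filter.cocompact ℝ) (𝓝 0) := by
  have h := tendsto_rpow_abs_mul_exp_neg_mul_sq_cocompact (one_half_pos) 1
  have h2 : Tendsto (fun x : ℝ => |x| * stmtAuxGE x) (Filter.cocompact ℝ) (𝓝 0) := by
    refine h.congr (fun x => ?_)
    rw [Real.rpow_one]; simp only [stmtAuxGE, neg_mul]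
  rw [tendsto_zero_iff_norm_tendsto_zero]
  refine h2.congr fun x => ?_
  rw [norm_mul, Real.norm_eq_abs, Real.norm_eq_abs,
    abs_of_pos (show (0:ℝ) < stmtAuxGE x from Real.exp_pos _)]

lemma stmtAux_tendsto_top : Tendsto (fun x => x * stmtAuxGE x) atTop (𝓝 0) :=
  stmtAux_tendsto_cocompact.mono_left (by rw [cocompact_eq_atBot_atTop]; exact le_sup_right)

lemma stmtAux_tendsto_bot : Tendsto (fun x => x * stmtAuxGE x) atBot (𝓝 0) :=
  stmtAux_tendsto_cocompact.mono_left (by rw [cocompact_eq_atBot_atTop]; exact le_sup_left)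

lemma stmtAuxF_deriv (x : ℝ) :
    HasDerivAt (fun y => -(y * stmtAuxGE y)) (x ^ 2 * stmtAuxGE x - stmtAuxGE x) x := by
  have h1 : HasDerivAt (fun y : ℝ => -(1/2) * y ^ 2) (-x) x := by
    have := (hasDerivAt_pow 2 x).const_mul (-(1/2) : ℝ)
    refine this.congr_deriv ?_; push_cast; ring
  have h2 : HasDerivAt (fun y : ℝ => stmtAuxGE y) (stmtAuxGE x * (-x)) x := h1.exp
  have h4 := ((hasDerivAt_id x).mul h2).neg
  refine h4.congr_deriv ?_
  simp only [stmtAuxGE, id_eq]; ring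

lemma stmtAuxGE2_integral : ∫ x, x ^ 2 * stmtAuxGE x = Real.sqrt (2 * π) := by
  set F' : ℝ → ℝ := fun x => x ^ 2 * stmtAuxGE x - stmtAuxGE x with hF'
  have hint : Integrable F' := stmtAuxGE2_int.sub stmtAuxGE_int
  have hnegtop : Tendsto (fun y => -(y * stmtAuxGE y)) atTop (𝓝 0) := by
    simpa using stmtAux_tendsto_top.neg
  have hnegbot : Tendsto (fun y => -(y * stmtAuxGE y)) atBot (𝓝 0) := by
    simpa using stmtAux_tendsto_bot.neg
  have htop := integral_Ioi_of_hasDerivAt_of_tendsto' (a := 0)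
    (fun x _ => stmtAuxF_deriv x) hint.integrableOn hnegtop
  have hbot := integral_Iic_of_hasDerivAt_of_tendsto' (a := 0)
    (fun x _ => stmtAuxF_deriv x) hint.integrableOn hnegbot
  have htotal : ∫ x, F' x = 0 := by
    rw [← intervalIntegral.integral_Iic_add_Ioi hint.integrableOn hint.integrableOn,
      htop, hbot]
    simp
  have := integral_sub stmtAuxGE2_int stmtAuxGE_int
  rw [hF'] at htotal
  rw [this] at htotal
  rw [stmtAuxGE_integral] at htotal
  linarith

lemma stmtAux_pdf_eq (x : ℝ) :
    gaussianPDFReal 0 1 x = (Real.sqrt (2 * π))⁻¹ * stmtAuxGE x := by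
  simp only [gaussianPDFReal, stmtAuxGE, NNReal.coe_one, mul_one, sub_zero]
  congr 1
  ring_nf

lemma stmtAux_gr_eq :
    gaussianReal 0 1
      = volume.withDensity (fun x => ((gaussianPDFReal 0 1 x).toNNReal : ℝ≥0∞)) := by
  rw [gaussianReal_of_var_ne_zero 0 one_ne_zero]
  rfl

lemma stmtAux_gr_integral (g : ℝ → ℝ) :
    ∫ x, g x ∂(gaussianReal 0 1) = ∫ x, gaussianPDFReal 0 1 x * g x := by
  rw [stmtAux_gr_eq, integral_withDensity_eq_integral_smul
    ((measurable_gaussianPDFReal 0 1).real_toNNReal) g]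
  congr 1
  funext x
  rw [NNReal.smul_def, smul_eq_mul, Real.coe_toNNReal _ (gaussianPDFReal_nonneg 0 1 x)]

lemma stmtAux_gr_integrable {g : ℝ → ℝ}
    (h : Integrable (fun x => gaussianPDFReal 0 1 x * g x)) :
    Integrable g (gaussianReal 0 1) := by
  rw [stmtAux_gr_eq, integrable_withDensity_iff_integrable_smul
    ((measurable_gaussianPDFReal 0 1).real_toNNReal)]
  refine h.congr (Eventually.of_forall fun x => ?_)
  simp [NNReal.smul_def, Real.coe_toNNReal _ (gaussianPDFReal_nonneg 0 1 x)]

lemma stmtAux_sqrt2pi_pos : (0:ℝ) < Real.sqrt (2 * π) :=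
  Real.sqrt_pos.mpr (by positivity)

lemma stmtAux_gr_int_id : Integrable (fun x => x) (gaussianReal 0 1) := by
  refine stmtAux_gr_integrable ?_
  have : (fun x => gaussianPDFReal 0 1 x * x)
      = fun x => (Real.sqrt (2*π))⁻¹ * (x * stmtAuxGE x) := by
    funext x; rw [stmtAux_pdf_eq]; ring
  rw [this]; exact stmtAuxGE1_int.const_mul _

lemma stmtAux_gr_int_sq : Integrable (fun x => x * x) (gaussianReal 0 1) := by
  refine stmtAux_gr_integrable ?_
  have : (fun x => gaussianPDFReal 0 1 x * (x * x))
      = fun x => (Real.sqrt (2*π))⁻¹ * (x ^ 2 * stmtAuxGE x) := by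
    funext x; rw [stmtAux_pdf_eq]; ring
  rw [this]; exact stmtAuxGE2_int.const_mul _

lemma stmtAux_gr_moment1 : ∫ x, x ∂(gaussianReal 0 1) = 0 := by
  rw [stmtAux_gr_integral]
  have : (fun x => gaussianPDFReal 0 1 x * x)
      = fun x => (Real.sqrt (2*π))⁻¹ * (x * stmtAuxGE x) := by
    funext x; rw [stmtAux_pdf_eq]; ring
  rw [this, integral_const_mul, stmtAuxGE1_integral, mul_zero]

lemma stmtAux_gr_moment2 : ∫ x, x * x ∂(gaussianReal 0 1) = 1 := by
  rw [stmtAux_gr_integral]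
  have : (fun x => gaussianPDFReal 0 1 x * (x * x))
      = fun x => (Real.sqrt (2*π))⁻¹ * (x ^ 2 * stmtAuxGE x) := by
    funext x; rw [stmtAux_pdf_eq]; ring
  rw [this, integral_const_mul, stmtAuxGE2_integral,
    inv_mul_cancel₀ (ne_of_gt stmtAux_sqrt2pi_pos)]

end Aux

/-- The standard Gaussian measure on `ℝ^p` (mean `0`, covariance `I_p`). -/
noncomputable def stdGaussian (p : ℕ) : Measure (Fin p → ℝ) :=
  Measure.pi (fun _ => gaussianReal 0 1)

open scoped ComplexOrder in
/-- The positive semidefinite square root of a positive semidefinite matrix (the definition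
`Matrix.PosSemidef.sqrt` of the older Mathlib, which has since been removed). -/
noncomputable def Matrix.PosSemidef.sqrt {n : Type*} [Fintype n] [DecidableEq n] {𝕜 : Type*}
    [RCLike 𝕜] {A : Matrix n n 𝕜} (hA : A.PosSemidef) : Matrix n n 𝕜 :=
  hA.1.eigenvectorUnitary.1 * diagonal ((fun x : ℝ => (x : 𝕜)) ∘ Real.sqrt ∘ hA.1.eigenvalues) *
  (star hA.1.eigenvectorUnitary : Matrix n n 𝕜)

lemma stmtAux_sqrt_mul_self {p : ℕ} {Γ : Matrix (Fin p) (Fin p) ℝ} (hΓ : Γ.PosSemidef) :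
    hΓ.sqrt * hΓ.sqrt = Γ := by
  unfold Matrix.PosSemidef.sqrt
  set U := hΓ.1.eigenvectorUnitary
  have hU : (star U : Matrix (Fin p) (Fin p) ℝ) * U.1 = 1 := Unitary.coe_star_mul_self U
  have hD : diagonal ((fun x : ℝ => (x : ℝ)) ∘ Real.sqrt ∘ hΓ.1.eigenvalues) *
      diagonal ((fun x : ℝ => (x : ℝ)) ∘ Real.sqrt ∘ hΓ.1.eigenvalues)
      = diagonal (RCLike.ofReal ∘ hΓ.1.eigenvalues) := by
    rw [diagonal_mul_diagonal]
    congr 1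
    funext i
    simp only [Function.comp_apply, RCLike.ofReal_real_eq_id, id_eq]
    exact Real.mul_self_sqrt (hΓ.eigenvalues_nonneg i)
  conv_rhs => rw [hΓ.1.spectral_theorem]
  rw [Unitary.conjStarAlgAut_apply, ← hD]
  simp only [Matrix.mul_assoc]
  rw [← Matrix.mul_assoc (star U : Matrix (Fin p) (Fin p) ℝ) U.1, hU, Matrix.one_mul]
  rfl

lemma stmtAux_sqrt_transpose {p : ℕ} {Γ : Matrix (Fin p) (Fin p) ℝ} (hΓ : Γ.PosSemidef) :
    hΓ.sqrtᵀ = hΓ.sqrt := by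
  unfold Matrix.PosSemidef.sqrt
  rw [transpose_mul, transpose_mul, diagonal_transpose, Matrix.mul_assoc]
  have h1 : ((star hΓ.1.eigenvectorUnitary : Matrix (Fin p) (Fin p) ℝ))ᵀ
      = hΓ.1.eigenvectorUnitary.1 := by
    rw [star_eq_conjTranspose, conjTranspose_eq_transpose_of_trivial,
      transpose_transpose]
  have h2 : (hΓ.1.eigenvectorUnitary.1)ᵀ
      = (star hΓ.1.eigenvectorUnitary : Matrix (Fin p) (Fin p) ℝ) := by
    rw [star_eq_conjTranspose, conjTranspose_eq_transpose_of_trivial]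
  rw [h1, h2]

section PiAux

open Filter

instance stmtAux_sg_prob (p : ℕ) : IsProbabilityMeasure (stdGaussian p) := by
  unfold _root_.stdGaussian; infer_instance

lemma stmtAux_sg_integral_prod {p : ℕ} (f : Fin p → ℝ → ℝ) :
    ∫ w, ∏ i, f i (w i) ∂(stdGaussian p) = ∏ i, ∫ x, f i x ∂(gaussianReal 0 1) :=
  MeasureTheory.integral_fintype_prod_eq_prod (E := fun _ => ℝ) f
    (μ := fun _ => gaussianReal 0 1)

lemma stmtAux_sg_integrable_prod {p : ℕ} (f : Fin p → ℝ → ℝ)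
    (hf : ∀ i, Integrable (f i) (gaussianReal 0 1)) :
    Integrable (fun w => ∏ i, f i (w i)) (stdGaussian p) :=
  MeasureTheory.Integrable.fintype_prod (μ := fun _ => gaussianReal 0 1) hf

noncomputable def stmtAuxE1 {p : ℕ} (k : Fin p) : Fin p → ℝ → ℝ :=
  fun i x => if i = k then x else 1

noncomputable def stmtAuxE2 {p : ℕ} (k l : Fin p) : Fin p → ℝ → ℝ :=
  fun i x => (if i = k then x else 1) * (if i = l then x else 1)

lemma stmtAuxE1_prod {p : ℕ} (k : Fin p) (w : Fin p → ℝ) :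
    ∏ i, stmtAuxE1 k i (w i) = w k := by
  simp [stmtAuxE1]

lemma stmtAuxE2_prod {p : ℕ} (k l : Fin p) (w : Fin p → ℝ) :
    ∏ i, stmtAuxE2 k l i (w i) = w k * w l := by
  unfold stmtAuxE2
  rw [Finset.prod_mul_distrib]
  simp

lemma stmtAuxE1_integrable {p : ℕ} (k i : Fin p) :
    Integrable (stmtAuxE1 k i) (gaussianReal 0 1) := by
  unfold stmtAuxE1
  by_cases h : i = k <;> simp [h, stmtAux_gr_int_id]

lemma stmtAuxE2_integrable {p : ℕ} (k l i : Fin p) :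
    Integrable (stmtAuxE2 k l i) (gaussianReal 0 1) := by
  unfold stmtAuxE2
  by_cases h : i = k
  · subst h
    by_cases h' : i = l
    · subst h'; simpa using stmtAux_gr_int_sq
    · simpa [h'] using stmtAux_gr_int_id
  · by_cases h' : i = l
    · subst h'; simpa [h] using stmtAux_gr_int_id
    · simpa [h, h'] using integrable_const (α := ℝ) (μ := gaussianReal 0 1) (1:ℝ)

lemma stmtAux_sg_int_eval {p : ℕ} (k : Fin p) :
    Integrable (fun w => w k) (stdGaussian p) := by
  have := stmtAux_sg_integrable_prod (stmtAuxE1 k) (stmtAuxE1_integrable k)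
  exact this.congr (Eventually.of_forall fun w => stmtAuxE1_prod k w)

lemma stmtAux_sg_int_eval_mul {p : ℕ} (k l : Fin p) :
    Integrable (fun w => w k * w l) (stdGaussian p) :=
  (stmtAux_sg_integrable_prod (stmtAuxE2 k l) (stmtAuxE2_integrable k l)).congr
    (Eventually.of_forall fun w => stmtAuxE2_prod k l w)

lemma stmtAux_sg_moment1 {p : ℕ} (k : Fin p) : ∫ w, w k ∂(stdGaussian p) = 0 := by
  have h1 : ∫ w, w k ∂(stdGaussian p) = ∏ i, ∫ x, stmtAuxE1 k i x ∂(gaussianReal 0 1) := by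
    rw [← stmtAux_sg_integral_prod]
    exact integral_congr_ae (Eventually.of_forall fun w => (stmtAuxE1_prod k w).symm)
  rw [h1, Finset.prod_eq_zero (Finset.mem_univ k)]
  unfold stmtAuxE1
  simp [stmtAux_gr_moment1]

lemma stmtAux_sg_moment2 {p : ℕ} (k l : Fin p) :
    ∫ w, w k * w l ∂(stdGaussian p) = if k = l then 1 else 0 := by
  have h1 : ∫ w, w k * w l ∂(stdGaussian p)
      = ∏ i, ∫ x, stmtAuxE2 k l i x ∂(gaussianReal 0 1) := by
    rw [← stmtAux_sg_integral_prod]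
    exact integral_congr_ae (Eventually.of_forall fun w => (stmtAuxE2_prod k l w).symm)
  rcases eq_or_ne k l with rfl | h
  · rw [h1, if_pos rfl, Finset.prod_eq_one]
    intro i _
    unfold stmtAuxE2
    by_cases hik : i = k
    · simp only [hik, if_pos rfl]
      exact stmtAux_gr_moment2
    · simp only [if_neg hik, mul_one]
      simp
  · rw [h1, if_neg h, Finset.prod_eq_zero (Finset.mem_univ k)]
    unfold stmtAuxE2
    simp only [if_pos rfl, if_neg h, mul_one]
    exact stmtAux_gr_moment1

lemma stmtAux_sg_linear {p : ℕ} (M : Matrix (Fin p) (Fin p) ℝ) (c : Fin p → ℝ) (i : Fin p) :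
    ∫ w, (c i + M.mulVec w i) ∂(stdGaussian p) = c i := by
  have he : (fun w : Fin p → ℝ => c i + M.mulVec w i)
      = fun w => c i + ∑ k, M i k * w k := by
    funext w; rfl
  have hint : Integrable (fun w : Fin p → ℝ => ∑ k, M i k * w k) (stdGaussian p) :=
    integrable_finset_sum _ (fun k _ => (stmtAux_sg_int_eval k).const_mul _)
  rw [he, integral_add (integrable_const _) hint, integral_const, integral_finset_sum _
    (fun k _ => (stmtAux_sg_int_eval k).const_mul _)]
  simp [integral_const_mul, stmtAux_sg_moment1]

lemma stmtAux_sg_quadratic {p : ℕ} (M : Matrix (Fin p) (Fin p) ℝ) (c : Fin p → ℝ)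
    (i j : Fin p) :
    ∫ w, (c i + M.mulVec w i) * (c j + M.mulVec w j) ∂(stdGaussian p)
      = c i * c j + (M * Mᵀ) i j := by
  have he : (fun w : Fin p → ℝ => (c i + M.mulVec w i) * (c j + M.mulVec w j))
      = fun w => (c i * c j + (∑ k, (c i * M j k) * w k + ∑ k, (c j * M i k) * w k))
          + ∑ k, ∑ l, (M i k * M j l) * (w k * w l) := by
    funext w
    show (c i + ∑ k, M i k * w k) * (c j + ∑ k, M j k * w k) = _
    rw [add_mul, mul_add, mul_add, Finset.sum_mul_sum, Finset.mul_sum, Finset.sum_mul]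
    have h1 : ∀ k, c i * (M j k * w k) = (c i * M j k) * w k := fun k => by ring
    have h2 : ∀ k, (M i k * w k) * c j = (c j * M i k) * w k := fun k => by ring
    have h3 : ∀ k l, (M i k * w k) * (M j l * w l) = (M i k * M j l) * (w k * w l) :=
      fun k l => by ring
    simp only [h1, h2, h3]
    ring
  have hintL : ∀ (d : Fin p → ℝ), Integrable
      (fun w : Fin p → ℝ => ∑ k, d k * w k) (stdGaussian p) :=
    fun d => integrable_finset_sum _ (fun k _ => (stmtAux_sg_int_eval k).const_mul _)
  have hintQ : Integrable
      (fun w : Fin p → ℝ => ∑ k, ∑ l, (M i k * M j l) * (w k * w l)) (stdGaussian p) :=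
    integrable_finset_sum _ (fun k _ => integrable_finset_sum _
      (fun l _ => (stmtAux_sg_int_eval_mul k l).const_mul _))
  have hintC := integrable_const (μ := stdGaussian p) (c i * c j)
  have hintA := hintL (fun k => c i * M j k)
  have hintB := hintL (fun k => c j * M i k)
  have hintAB : Integrable (fun w : Fin p → ℝ =>
      ∑ k, (c i * M j k) * w k + ∑ k, (c j * M i k) * w k) (stdGaussian p) :=
    hintA.add hintB
  have hintCAB : Integrable (fun w : Fin p → ℝ =>
      c i * c j + (∑ k, (c i * M j k) * w k + ∑ k, (c j * M i k) * w k)) (stdGaussian p) :=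
    hintC.add hintAB
  rw [he, integral_add hintCAB hintQ,
    integral_add hintC hintAB,
    integral_add hintA hintB, integral_const]
  have hz : ∀ (d : Fin p → ℝ), ∫ w, (∑ k, d k * w k) ∂(stdGaussian p) = 0 := by
    intro d
    rw [integral_finset_sum _ (fun k _ => (stmtAux_sg_int_eval k).const_mul _)]
    simp [integral_const_mul, stmtAux_sg_moment1]
  have hq : ∫ w, (∑ k, ∑ l, (M i k * M j l) * (w k * w l)) ∂(stdGaussian p)
      = (M * Mᵀ) i j := by
    rw [integral_finset_sum _ (fun k _ => integrable_finset_sum _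
      (fun l _ => (stmtAux_sg_int_eval_mul k l).const_mul _))]
    have : ∀ k, ∫ w, (∑ l, (M i k * M j l) * (w k * w l)) ∂(stdGaussian p)
        = M i k * M j k := by
      intro k
      rw [integral_finset_sum _ (fun l _ => (stmtAux_sg_int_eval_mul k l).const_mul _)]
      simp only [integral_const_mul, stmtAux_sg_moment2]
      simp [Finset.sum_ite_eq, mul_ite, mul_one, mul_zero]
    simp only [this, mul_apply, transpose_apply]
  rw [hz, hz, hq]
  simp

end PiAux

section MatrixAux

lemma stmtAux_vecMulVec_conj {p : ℕ} (A : Matrix (Fin p) (Fin p) ℝ) (x y : Fin p → ℝ) :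
    A * vecMulVec x y * Aᵀ = vecMulVec (A.mulVec x) (A.mulVec y) := by
  ext i j
  simp only [mul_apply, vecMulVec_apply, mulVec, dotProduct, transpose_apply,
    Finset.sum_mul, Finset.mul_sum]
  exact Finset.sum_congr rfl fun k _ => Finset.sum_congr rfl fun m _ => by ring

lemma stmtAux_rank_posDef {p r : ℕ} (Γ : Matrix (Fin p) (Fin p) ℝ) (hΓ : Γ.PosDef)
    (Υ : Matrix (Fin p) (Fin r) ℝ) (hΥ : Υ.rank = r) :
    (Υᵀ * Γ * Υ).PosDef := by
  have hinj : Function.Injective Υ.mulVecLin := by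
    rw [← LinearMap.ker_eq_bot]
    have hrn := Υ.mulVecLin.finrank_range_add_finrank_ker
    rw [show Module.finrank ℝ (LinearMap.range Υ.mulVecLin) = Υ.rank from rfl, hΥ] at hrn
    simp only [Module.finrank_fintype_fun_eq_card, Fintype.card_fin] at hrn
    have : Module.finrank ℝ (LinearMap.ker Υ.mulVecLin) = 0 := by omega
    exact Submodule.finrank_eq_zero.mp this
  refine Matrix.PosDef.of_dotProduct_mulVec_pos ?_ ?_
  · have hΓt : Γᵀ = Γ := hΓ.1
    show (Υᵀ * Γ * Υ)ᴴ = _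
    rw [conjTranspose_eq_transpose_of_trivial]
    rw [transpose_mul, transpose_mul, transpose_transpose, hΓt, Matrix.mul_assoc]
  · intro x hx
    have hx' : Υ.mulVec x ≠ 0 := by
      intro h
      exact hx (hinj (by simpa using h))
    have := hΓ.dotProduct_mulVec_pos hx'
    simpa [star_trivial, ← mulVec_mulVec, dotProduct_mulVec, vecMul_transpose] using this

end MatrixAux

theorem stmt16 (p r : ℕ) (Γ : Matrix (Fin p) (Fin p) ℝ) (hΓ : Γ.PosDef)
    (Υ : Matrix (Fin p) (Fin r) ℝ) (hΥ : Υ.rank = r)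
    (τ : Fin p → ℝ) :
    let R := hΓ.posSemidef.sqrt
    let P := R * Υ * (Υᵀ * Γ * Υ)⁻¹ * Υᵀ * R
    let Pperp := (1 : Matrix (Fin p) (Fin p) ℝ) - P
    let X : (Fin p → ℝ) → Fin p → ℝ := fun w => Γ.mulVec τ + R.mulVec w
    let Y : (Fin p → ℝ) → Fin p → ℝ := fun w => (R⁻¹ * P * R⁻¹).mulVec (X w) - τ
    let δ : Fin p → ℝ := -(R⁻¹ * Pperp * R).mulVec τ
    (∀ i, ∫ w, Y w i ∂(stdGaussian p) = δ i) ∧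
    (∀ i j, ∫ w, Y w i * Y w j ∂(stdGaussian p) - δ i * δ j = (R⁻¹ * P * R⁻¹) i j) ∧
    (∀ i j, ∫ w, Y w i * Y w j ∂(stdGaussian p)
      = (R⁻¹ * P * R⁻¹ + R⁻¹ * Pperp * R * vecMulVec τ τ * R * Pperp * R⁻¹) i j) := by
  intro R P Pperp X Y δ
  have hPdef : P = R * Υ * (Υᵀ * Γ * Υ)⁻¹ * Υᵀ * R := rfl
  have hPerpdef : Pperp = (1 : Matrix (Fin p) (Fin p) ℝ) - P := rfl
  have hδdef : δ = -(R⁻¹ * Pperp * R).mulVec τ := rfl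
  have hRR : R * R = Γ := stmtAux_sqrt_mul_self hΓ.posSemidef
  have hRherm : Rᵀ = R := by
    exact stmtAux_sqrt_transpose hΓ.posSemidef
  have hΓdet : Γ.det ≠ 0 := ne_of_gt hΓ.det_pos
  have hRdet : IsUnit R.det := by
    have hdet : R.det * R.det = Γ.det := by rw [← det_mul, hRR]
    refine isUnit_iff_ne_zero.mpr fun h0 => hΓdet ?_
    rw [← hdet, h0, mul_zero]
  have hRinv : R⁻¹ * R = 1 := nonsing_inv_mul R hRdet
  have hRinv' : R * R⁻¹ = 1 := mul_nonsing_inv R hRdet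
  have hRinvT : (R⁻¹)ᵀ = R⁻¹ := by rw [transpose_nonsing_inv, hRherm]
  have hΓT : Γᵀ = Γ := by
    have h : Γᴴ = Γ := hΓ.1
    rwa [conjTranspose_eq_transpose_of_trivial] at h
  have hBpd : (Υᵀ * Γ * Υ).PosDef := stmtAux_rank_posDef Γ hΓ Υ hΥ
  have hBdet : IsUnit (Υᵀ * Γ * Υ).det := (Matrix.isUnit_iff_isUnit_det _).mp hBpd.isUnit
  have hBT : (Υᵀ * Γ * Υ)ᵀ = Υᵀ * Γ * Υ := by
    rw [transpose_mul, transpose_mul, transpose_transpose, hΓT, Matrix.mul_assoc]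
  have hBiT : ((Υᵀ * Γ * Υ)⁻¹)ᵀ = (Υᵀ * Γ * Υ)⁻¹ := by
    rw [transpose_nonsing_inv, hBT]
  have hRRZ : ∀ Z : Matrix (Fin p) (Fin p) ℝ, R * (R * Z) = Γ * Z := fun Z => by
    rw [← Matrix.mul_assoc, hRR]
  have hBiZ : ∀ Z : Matrix (Fin r) (Fin p) ℝ,
      (Υᵀ * (Γ * Υ))⁻¹ * (Υᵀ * (Γ * (Υ * Z))) = Z := fun Z => by
    rw [show Υᵀ * (Γ * (Υ * Z)) = (Υᵀ * Γ * Υ) * Z from by simp only [Matrix.mul_assoc],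
      show (Υᵀ * (Γ * Υ))⁻¹ = (Υᵀ * Γ * Υ)⁻¹ from by rw [Matrix.mul_assoc],
      ← Matrix.mul_assoc, nonsing_inv_mul _ hBdet, Matrix.one_mul]
  have hBiT' : ((Υᵀ * (Γ * Υ))⁻¹)ᵀ = (Υᵀ * (Γ * Υ))⁻¹ := by
    rw [← Matrix.mul_assoc]
    exact hBiT
  have hPP : P * P = P := by
    rw [hPdef]
    simp only [Matrix.mul_assoc]
    rw [hRRZ, hBiZ]
  have hPT : Pᵀ = P := by
    rw [hPdef]
    simp only [transpose_mul, transpose_transpose, hRherm, hBiT', Matrix.mul_assoc]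
  have hPerpT : Pperpᵀ = Pperp := by
    rw [hPerpdef, transpose_sub, transpose_one, hPT]
  -- covariance matrix identity
  have hMMT : (R⁻¹ * P) * (R⁻¹ * P)ᵀ = R⁻¹ * P * R⁻¹ := by
    rw [transpose_mul, hRinvT, hPT, Matrix.mul_assoc, ← Matrix.mul_assoc P P R⁻¹, hPP,
      ← Matrix.mul_assoc]
  -- mean decomposition
  have hA1 : R⁻¹ * P * R⁻¹ * Γ = R⁻¹ * (P * R) := by
    rw [← hRR]
    simp only [Matrix.mul_assoc]
    rw [show R⁻¹ * (R * R) = R from by rw [← Matrix.mul_assoc, hRinv, one_mul]]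
  have hA2 : R⁻¹ * P * R⁻¹ * R = R⁻¹ * P := by
    rw [Matrix.mul_assoc, hRinv, Matrix.mul_one]
  have hA3 : R⁻¹ * Pperp * R = 1 - R⁻¹ * (P * R) := by
    rw [hPerpdef, Matrix.mul_sub, Matrix.mul_one, Matrix.sub_mul, hRinv, Matrix.mul_assoc,
      Matrix.mul_assoc]
  have hδ' : ∀ i, δ i = (R⁻¹ * (P * R)).mulVec τ i - τ i := by
    intro i
    rw [hδdef]
    simp only [Pi.neg_apply, hA3, Matrix.sub_mulVec, Matrix.one_mulVec, Pi.sub_apply]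
    ring
  have hYw : ∀ w i, Y w i = δ i + (R⁻¹ * P).mulVec w i := by
    intro w i
    show ((R⁻¹ * P * R⁻¹).mulVec (Γ.mulVec τ + R.mulVec w) - τ) i
      = δ i + (R⁻¹ * P).mulVec w i
    rw [Matrix.mulVec_add, Matrix.mulVec_mulVec, Matrix.mulVec_mulVec, hA1, hA2]
    simp only [Pi.sub_apply, Pi.add_apply, hδ' i]
    ring
  have hint1 : ∀ i, ∫ w, Y w i ∂(stdGaussian p) = δ i := by
    intro i
    rw [integral_congr_ae (Filter.Eventually.of_forall fun w => hYw w i)]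
    exact stmtAux_sg_linear (R⁻¹ * P) δ i
  have hint2 : ∀ i j, ∫ w, Y w i * Y w j ∂(stdGaussian p)
      = δ i * δ j + (R⁻¹ * P * R⁻¹) i j := by
    intro i j
    rw [integral_congr_ae (Filter.Eventually.of_forall fun w => by rw [hYw w i, hYw w j]),
      stmtAux_sg_quadratic (R⁻¹ * P) δ i j, hMMT]
  refine ⟨hint1, fun i j => by rw [hint2]; ring, ?_⟩
  intro i j
  have hAT : (R⁻¹ * Pperp * R)ᵀ = R * (Pperp * R⁻¹) := by
    simp only [transpose_mul, hRherm, hRinvT, hPerpT, Matrix.mul_assoc]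
  have h3 : R⁻¹ * Pperp * R * vecMulVec τ τ * R * Pperp * R⁻¹
      = vecMulVec ((R⁻¹ * Pperp * R).mulVec τ) ((R⁻¹ * Pperp * R).mulVec τ) := by
    rw [← stmtAux_vecMulVec_conj, hAT]
    simp only [Matrix.mul_assoc]
  rw [hint2 i j, Matrix.add_apply, h3]
  rw [show δ i * δ j = vecMulVec ((R⁻¹ * Pperp * R).mulVec τ) ((R⁻¹ * Pperp * R).mulVec τ) i j
    from by rw [hδdef, vecMulVec_apply]; simp only [Pi.neg_apply]; ring]
  ring
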